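/- arXiv:1902.07847 — 5 statements merged into one kernel-verified Lean document; each statement's English description precedes it below -/
import Mathlib

section
/- Let Υ₁ and Υ₂ be independent random variables with α-μ power densities with parameters (α₁, μ₁, β₁) and (α₂, μ₂, β₂), and let k = α₁/α₂ ≤ 1. Then the density of X = Υ₁/Υ₂ admits the series representation f_X(x) = [α₁ x^(α₁μ₁/2 − 1) β₂^(α₁μ₁/2) / (2 β₁^(α₁μ₁/2) Γ(μ₁) Γ(μ₂))] · Σ_{h=0}^∞ (−1)^h z^h Γ(k(h+μ₁)+μ₂) / h!, with z = (xβ₂/β₁)^(α₁/2), convergent for all x > 0 when k < 1 (and for z < 1 when k = 1). -/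
open MeasureTheory Real Set
open scoped ENNReal NNReal

/-- The α-μ power (squared-envelope / SNR) density. -/
noncomputable def alphaMuPowerPDF (α μ β γ : ℝ) : ℝ :=
  α / 2 * γ ^ (α * μ / 2 - 1) / (β ^ (α * μ / 2) * Real.Gamma μ) *
    Real.exp (-((γ / β) ^ (α / 2)))

lemma aux_integrableOn {p q c : ℝ} (hp : 0 < p) (hq : -1 < q) (hc : 0 < c) :
    IntegrableOn (fun y : ℝ => y ^ q * Real.exp (-(c * y ^ p))) (Ioi 0) := by
  have hs : 0 < (q + 1) / p := div_pos (by linarith) hp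
  have h0 : IntegrableOn (fun t : ℝ => Real.exp (-t) * t ^ ((q + 1) / p - 1)) (Ioi 0) :=
    Real.GammaIntegral_convergent hs
  have h1 : IntegrableOn (fun t : ℝ => Real.exp (-(c * t)) * (c * t) ^ ((q + 1) / p - 1))
      (Ioi 0) := by
    have := (integrableOn_Ioi_comp_mul_left_iff
      (fun t : ℝ => Real.exp (-t) * t ^ ((q + 1) / p - 1)) 0 hc).mpr
    simp only [mul_zero] at this
    exact this h0
  have h2 : IntegrableOn (fun t : ℝ => t ^ ((q + 1) / p - 1) * Real.exp (-(c * t))) (Ioi 0) := by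
    have h3 : IntegrableOn (fun t : ℝ => c ^ (-((q + 1) / p - 1)) *
        (Real.exp (-(c * t)) * (c * t) ^ ((q + 1) / p - 1))) (Ioi 0) := h1.const_mul _
    refine h3.congr_fun (fun t ht => ?_) measurableSet_Ioi
    dsimp only; rw [mul_rpow hc.le (le_of_lt ht), ← mul_assoc, mul_comm (c ^ (-((q+1)/p-1)))
      (Real.exp (-(c*t))), mul_assoc, ← mul_assoc (c ^ (-((q+1)/p-1))), ← rpow_add hc]
    simp [mul_comm]
  have h4 := (integrableOn_Ioi_comp_rpow_iff'
    (fun t : ℝ => t ^ ((q + 1) / p - 1) * Real.exp (-(c * t))) hp.ne').mpr h2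
  refine h4.congr_fun (fun y hy => ?_) measurableSet_Ioi
  have hy0 : (0:ℝ) < y := hy
  dsimp only; rw [smul_eq_mul, ← rpow_mul hy0.le, ← mul_assoc, ← rpow_add hy0]
  rw [show p - 1 + p * ((q + 1) / p - 1) = q by field_simp; ring]

theorem ratio_density_series
    (α₁ μ₁ β₁ α₂ μ₂ β₂ : ℝ)
    (hα₁ : 0 < α₁) (hμ₁ : 0 < μ₁) (hβ₁ : 0 < β₁)
    (hα₂ : 0 < α₂) (hμ₂ : 0 < μ₂) (hβ₂ : 0 < β₂)
    (k : ℝ) (hk : k = α₁ / α₂) (hk1 : k ≤ 1)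
    (x : ℝ) (hx : 0 < x)
    (z : ℝ) (hz : z = (x * β₂ / β₁) ^ (α₁ / 2))
    (hz1 : k = 1 → z < 1) :
    Summable (fun h : ℕ =>
      (-1 : ℝ) ^ h * z ^ h * Real.Gamma (k * (h + μ₁) + μ₂) / h.factorial) ∧
    (∫ y in Ioi (0:ℝ),
        y * alphaMuPowerPDF α₁ μ₁ β₁ (x * y) * alphaMuPowerPDF α₂ μ₂ β₂ y) =
      α₁ * x ^ (α₁ * μ₁ / 2 - 1) * β₂ ^ (α₁ * μ₁ / 2) /
        (2 * β₁ ^ (α₁ * μ₁ / 2) * Real.Gamma μ₁ * Real.Gamma μ₂) *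
      ∑' h : ℕ,
        (-1 : ℝ) ^ h * z ^ h * Real.Gamma (k * (h + μ₁) + μ₂) / h.factorial := by
  have hΓ₁ : 0 < Real.Gamma μ₁ := Real.Gamma_pos_of_pos hμ₁
  have hΓ₂ : 0 < Real.Gamma μ₂ := Real.Gamma_pos_of_pos hμ₂
  set a₁ : ℝ := α₁ * μ₁ / 2 with ha₁
  set a₂ : ℝ := α₂ * μ₂ / 2 with ha₂
  have ha₁0 : 0 < a₁ := by positivity
  have ha₂0 : 0 < a₂ := by positivity
  set w : ℝ := (x / β₁) ^ (α₁ / 2) with hw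
  have hw0 : 0 < w := rpow_pos_of_pos (div_pos hx hβ₁) _
  set b : ℝ := β₂ ^ (-(α₂ / 2)) with hb
  have hb0 : 0 < b := rpow_pos_of_pos hβ₂ _
  have hz0 : 0 < z := hz ▸ rpow_pos_of_pos (div_pos (mul_pos hx hβ₂) hβ₁) _
  have hwz : w * β₂ ^ (α₁ / 2) = z := by
    rw [hw, hz, ← mul_rpow (le_of_lt (div_pos hx hβ₁)) hβ₂.le]
    congr 1; field_simp
  set C : ℝ := α₁ / 2 * (α₂ / 2) * x ^ (a₁ - 1) /
      (β₁ ^ a₁ * Real.Gamma μ₁ * β₂ ^ a₂ * Real.Gamma μ₂) with hC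
  have hC0 : 0 < C := by
    apply div_pos (by positivity) (by positivity)
  set K : ℝ := α₁ * x ^ (a₁ - 1) * β₂ ^ a₁ /
      (2 * β₁ ^ a₁ * Real.Gamma μ₁ * Real.Gamma μ₂) with hK
  have hK0 : 0 < K := by apply div_pos (by positivity) (by positivity)
  set T : ℕ → ℝ := fun h =>
      (-1 : ℝ) ^ h * z ^ h * Real.Gamma (k * (h + μ₁) + μ₂) / h.factorial with hT
  set f : ℕ → ℝ → ℝ := fun h y =>
      C * ((-w) ^ h / h.factorial) *
        (y ^ (a₁ + a₂ - 1 + α₁ / 2 * h) * Real.exp (-b * y ^ (α₂ / 2))) with hf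
  -- the common HasSum fact
  have hcore : ∀ (c u : ℝ) (y : ℝ), 0 < y →
      HasSum (fun h : ℕ => c * (u ^ h / h.factorial) *
          (y ^ (a₁ + a₂ - 1 + α₁ / 2 * h) * Real.exp (-b * y ^ (α₂ / 2))))
        (c * (y ^ (a₁ + a₂ - 1) * Real.exp (-b * y ^ (α₂ / 2))) *
          Real.exp (u * y ^ (α₁ / 2))) := by
    intro c u y hy
    have h1 : HasSum (fun h : ℕ => (u * y ^ (α₁ / 2)) ^ h / h.factorial)
        (Real.exp (u * y ^ (α₁ / 2))) := by
      rw [Real.exp_eq_exp_ℝ]; exact NormedSpace.expSeries_div_hasSum_exp _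
    have h2 := h1.mul_left (c * (y ^ (a₁ + a₂ - 1) * Real.exp (-b * y ^ (α₂ / 2))))
    refine HasSum.congr_fun h2 fun h => ?_
    rw [mul_pow, rpow_add hy, rpow_mul hy.le, rpow_natCast]
    ring
  -- the Gamma-argument computation
  have hGarg : ∀ h : ℕ, (a₁ + a₂ - 1 + α₁ / 2 * h + 1) / (α₂ / 2) = k * (h + μ₁) + μ₂ := by
    intro h
    rw [hk, ha₁, ha₂]
    field_simp
    ring
  -- the per-term integral
  have hterm : ∀ h : ℕ, (∫ y in Ioi (0:ℝ), f h y) = K * T h := by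
    intro h
    have hq : (-1 : ℝ) < a₁ + a₂ - 1 + α₁ / 2 * h := by
      have : (0:ℝ) ≤ α₁ / 2 * h := by positivity
      linarith
    simp only [hf]
    rw [MeasureTheory.integral_const_mul,
      integral_rpow_mul_exp_neg_mul_rpow (by positivity) hq hb0, hGarg h]
    have hbpow : b ^ (-(a₁ + a₂ - 1 + α₁ / 2 * h + 1) / (α₂ / 2)) =
        β₂ ^ a₁ * β₂ ^ a₂ * (β₂ ^ (α₁ / 2)) ^ h := by
      rw [hb, ← rpow_natCast (β₂ ^ (α₁ / 2)) h, ← rpow_mul hβ₂.le, ← rpow_mul hβ₂.le,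
        ← rpow_add hβ₂, ← rpow_add hβ₂]
      congr 1
      field_simp
      ring
    have hne : ((-1:ℝ)) ^ h * z ^ h = (-w) ^ h * (β₂ ^ (α₁ / 2)) ^ h := by
      rw [← hwz, show -w = -1 * w by ring, mul_pow, mul_pow]; ring
    simp only [hbpow, hT, hC, hK]
    rw [hne]
    have hfac : (h.factorial:ℝ) ≠ 0 := by positivity
    field_simp
  -- pointwise identity of the series with the integrand
  have hpoint : ∀ y : ℝ, y ∈ Ioi (0:ℝ) →
      HasSum (fun h : ℕ => f h y)
        (y * alphaMuPowerPDF α₁ μ₁ β₁ (x * y) * alphaMuPowerPDF α₂ μ₂ β₂ y) := by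
    intro y hy
    have hy0 : (0:ℝ) < y := hy
    have h1 := hcore C (-w) y hy0
    have h2 : C * (y ^ (a₁ + a₂ - 1) * Real.exp (-b * y ^ (α₂ / 2))) *
        Real.exp (-w * y ^ (α₁ / 2)) =
        y * alphaMuPowerPDF α₁ μ₁ β₁ (x * y) * alphaMuPowerPDF α₂ μ₂ β₂ y := by
      unfold alphaMuPowerPDF
      have e1 : (x * y / β₁) ^ (α₁ / 2) = w * y ^ (α₁ / 2) := by
        rw [show x * y / β₁ = x / β₁ * y by ring,
          mul_rpow (le_of_lt (div_pos hx hβ₁)) hy0.le, hw]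
      have e2 : (y / β₂) ^ (α₂ / 2) = b * y ^ (α₂ / 2) := by
        rw [div_rpow hy0.le hβ₂.le, hb, rpow_neg hβ₂.le]
        ring
      have e3 : (x * y) ^ (a₁ - 1) = x ^ (a₁ - 1) * y ^ (a₁ - 1) :=
        mul_rpow hx.le hy0.le
      have e4 : y ^ (a₁ + a₂ - 1) = y ^ (1:ℝ) * y ^ (a₁ - 1) * y ^ (a₂ - 1) := by
        rw [← rpow_add hy0, ← rpow_add hy0]; ring_nf
      rw [e1, e2, e3, e4, rpow_one, neg_mul, ← neg_mul]
      rw [hC]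
      field_simp
      ring_nf
      simp only [ha₁, ha₂]; ring_nf
    rw [← h2]
    exact h1.congr_fun fun h => by simp only [hf]
  -- the nonnegative majorant
  set G : ℝ → ℝ := fun y =>
      C * (y ^ (a₁ + a₂ - 1) * Real.exp (-b * y ^ (α₂ / 2))) *
        Real.exp (w * y ^ (α₁ / 2)) with hG
  have hnormsum : ∀ y : ℝ, y ∈ Ioi (0:ℝ) →
      HasSum (fun h : ℕ => |f h y|) (G y) := by
    intro y hy
    have hy0 : (0:ℝ) < y := hy
    refine (hcore C w y hy0).congr_fun fun h => ?_
    have hrepr : f h y = (-1:ℝ) ^ h * (C * (w ^ h / (h.factorial:ℝ)) *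
        (y ^ (a₁ + a₂ - 1 + α₁ / 2 * h) * Real.exp (-b * y ^ (α₂ / 2)))) := by
      simp only [hf]; rw [show -w = -1 * w by ring, mul_pow]; ring
    rw [hrepr, abs_mul, abs_pow, abs_neg, abs_one, one_pow, one_mul,
      abs_of_nonneg (mul_nonneg (mul_nonneg hC0.le (by positivity)) (by positivity))]
  -- exponent bound
  have hcase : ∃ c : ℝ, 0 < c ∧ ∃ M : ℝ, ∀ y : ℝ, 0 < y →
      w * y ^ (α₁ / 2) - b * y ^ (α₂ / 2) ≤ M - c * y ^ (α₂ / 2) := by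
    rcases eq_or_lt_of_le hk1 with hkeq | hklt
    · -- k = 1, i.e. α₁ = α₂, and z < 1
      have hα : α₁ = α₂ := by
        rw [hk] at hkeq
        field_simp at hkeq
        linarith
      have hzlt : z < 1 := hz1 hkeq
      have h5 : (0:ℝ) < β₂ ^ (α₁ / 2) := rpow_pos_of_pos hβ₂ _
      have hbw : b * β₂ ^ (α₁ / 2) = 1 := by
        rw [hb, ← hα, ← rpow_add hβ₂, neg_add_cancel, rpow_zero]
      have hwb : w < b := by
        have := hwz
        rw [← mul_lt_mul_iff_of_pos_right h5, hwz, hbw]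
        exact hzlt
      refine ⟨b - w, by linarith, 0, fun y hy => ?_⟩
      rw [hα]
      have : w * y ^ (α₂ / 2) - b * y ^ (α₂ / 2) = 0 - (b - w) * y ^ (α₂ / 2) := by ring
      linarith
    · -- α₁ < α₂
      have hαlt : α₁ < α₂ := by
        rw [hk, div_lt_one hα₂] at hklt
        exact hklt
      set d : ℝ := α₂ / 2 - α₁ / 2 with hd
      have hd0 : 0 < d := by rw [hd]; linarith
      set Y₀ : ℝ := (2 * w / b) ^ (1 / d) with hY₀
      have hY₀0 : 0 < Y₀ := rpow_pos_of_pos (by positivity) _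
      set Y : ℝ := max 1 Y₀ with hY
      have hY0 : 0 < Y := lt_of_lt_of_le one_pos (le_max_left _ _)
      refine ⟨b / 2, by positivity, w * Y ^ (α₁ / 2), fun y hy => ?_⟩
      have hM0 : 0 ≤ w * Y ^ (α₁ / 2) := by positivity
      rcases le_or_gt y Y with hyY | hyY
      · have h6 : w * y ^ (α₁ / 2) ≤ w * Y ^ (α₁ / 2) :=
          mul_le_mul_of_nonneg_left (rpow_le_rpow hy.le hyY (by positivity)) hw0.le
        have h7' : b * y ^ (α₂ / 2) = b / 2 * y ^ (α₂ / 2) + b / 2 * y ^ (α₂ / 2) := by ring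
        have h7'' : (0:ℝ) ≤ b / 2 * y ^ (α₂ / 2) := by positivity
        linarith
      · have hyY₀ : Y₀ ≤ y := le_of_lt (lt_of_le_of_lt (le_max_right 1 Y₀) hyY)
        have h8 : Y₀ ^ d ≤ y ^ d := rpow_le_rpow hY₀0.le hyY₀ hd0.le
        have h9 : Y₀ ^ d = 2 * w / b := by
          rw [hY₀, ← rpow_mul (by positivity : (0:ℝ) ≤ 2 * w / b),
            one_div_mul_cancel hd0.ne', rpow_one]
        have h10 : y ^ (α₂ / 2) = y ^ (α₁ / 2) * y ^ d := by
          rw [← rpow_add hy, hd]; ring_nf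
        have h11 : w * y ^ (α₁ / 2) ≤ b / 2 * y ^ (α₂ / 2) := by
          rw [h10]
          have h12 : 2 * w / b ≤ y ^ d := by rw [← h9]; exact h8
          have h16 : (0:ℝ) ≤ b / 2 * y ^ (α₁ / 2) := by positivity
          have h17 := mul_le_mul_of_nonneg_left h12 h16
          calc w * y ^ (α₁ / 2) = b / 2 * y ^ (α₁ / 2) * (2 * w / b) := by
                field_simp
            _ ≤ b / 2 * y ^ (α₁ / 2) * y ^ d := h17
            _ = b / 2 * (y ^ (α₁ / 2) * y ^ d) := by ring
        have h7' : b * y ^ (α₂ / 2) = b / 2 * y ^ (α₂ / 2) + b / 2 * y ^ (α₂ / 2) := by ring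
        linarith
  -- integrability of the majorant
  have hGmeas : Measurable G := by simp only [hG]; fun_prop
  have hGint : IntegrableOn G (Ioi 0) := by
    obtain ⟨c, hc0, M, hM⟩ := hcase
    have hq0 : (-1:ℝ) < a₁ + a₂ - 1 := by linarith
    have hmaj : IntegrableOn (fun y : ℝ => C * Real.exp M *
        (y ^ (a₁ + a₂ - 1) * Real.exp (-(c * y ^ (α₂ / 2))))) (Ioi 0) :=
      (aux_integrableOn (by positivity) hq0 hc0).const_mul _
    refine Integrable.mono hmaj hGmeas.aestronglyMeasurable ?_
    refine (ae_restrict_iff' measurableSet_Ioi).mpr (ae_of_all _ fun y hy => ?_)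
    have hy0 : (0:ℝ) < y := hy
    have hGnn : 0 ≤ G y := by
      simp only [hG]; positivity
    have hmajnn : (0:ℝ) ≤ C * Real.exp M *
        (y ^ (a₁ + a₂ - 1) * Real.exp (-(c * y ^ (α₂ / 2)))) := by positivity
    rw [Real.norm_eq_abs, Real.norm_eq_abs, abs_of_nonneg hGnn, abs_of_nonneg hmajnn]
    have e5 : G y = C * y ^ (a₁ + a₂ - 1) *
        Real.exp (w * y ^ (α₁ / 2) + -b * y ^ (α₂ / 2)) := by
      simp only [hG]; rw [Real.exp_add]; ring
    have e6 : Real.exp (w * y ^ (α₁ / 2) + -b * y ^ (α₂ / 2)) ≤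
        Real.exp M * Real.exp (-(c * y ^ (α₂ / 2))) := by
      rw [← Real.exp_add]
      apply Real.exp_le_exp.mpr
      have := hM y hy0
      linarith
    rw [e5]
    calc C * y ^ (a₁ + a₂ - 1) * Real.exp (w * y ^ (α₁ / 2) + -b * y ^ (α₂ / 2))
        ≤ C * y ^ (a₁ + a₂ - 1) * (Real.exp M * Real.exp (-(c * y ^ (α₂ / 2)))) := by
          apply mul_le_mul_of_nonneg_left e6 (by positivity)
      _ = C * Real.exp M * (y ^ (a₁ + a₂ - 1) * Real.exp (-(c * y ^ (α₂ / 2)))) := by ring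
  -- measurability of the terms
  have hfmeas : ∀ h : ℕ, AEStronglyMeasurable (f h) (volume.restrict (Ioi 0)) := by
    intro h
    have : Measurable (f h) := by simp only [hf]; fun_prop
    exact this.aestronglyMeasurable
  -- finiteness of the sum of the lintegrals of the norms
  have hfin : (∑' (h : ℕ), ∫⁻ y, ‖f h y‖₊ ∂(volume.restrict (Ioi 0))) ≠ ⊤ := by
    rw [← lintegral_tsum (fun h => (hfmeas h).aemeasurable.nnnorm.coe_nnreal_ennreal)]
    have heq : (∫⁻ y, (∑' (h : ℕ), (‖f h y‖₊ : ℝ≥0∞)) ∂(volume.restrict (Ioi 0))) =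
        ∫⁻ y, ENNReal.ofReal (G y) ∂(volume.restrict (Ioi 0)) := by
      refine lintegral_congr_ae ((ae_restrict_iff' measurableSet_Ioi).mpr
        (ae_of_all _ fun y hy => ?_))
      have hs := hnormsum y hy
      calc (∑' (h : ℕ), (‖f h y‖₊ : ℝ≥0∞)) = ∑' (h : ℕ), ENNReal.ofReal |f h y| :=
            tsum_congr fun h => Real.enorm_eq_ofReal_abs _
        _ = ENNReal.ofReal (∑' (h : ℕ), |f h y|) :=
            (ENNReal.ofReal_tsum_of_nonneg (fun h => abs_nonneg _) hs.summable).symm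
        _ = ENNReal.ofReal (G y) := by rw [hs.tsum_eq]
    rw [heq]
    exact hGint.lintegral_lt_top.ne
  -- summability
  have h1 : Summable (fun h : ℕ => (∫⁻ y, ‖f h y‖₊ ∂(volume.restrict (Ioi 0))).toReal) :=
    ENNReal.summable_toReal hfin
  have h2 : ∀ h : ℕ, ‖K * T h‖ ≤ (∫⁻ y, ‖f h y‖₊ ∂(volume.restrict (Ioi 0))).toReal := by
    intro h
    rw [← hterm h]
    simp_rw [← enorm_eq_nnnorm, ← ofReal_norm]
    exact MeasureTheory.norm_integral_le_lintegral_norm (f h)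
  have h3 : Summable fun h : ℕ => K * T h := Summable.of_norm_bounded h1 h2
  have hTsum : Summable T := by
    have h4 := h3.mul_left K⁻¹
    refine h4.congr fun h => ?_
    field_simp
  refine ⟨hTsum, ?_⟩
  rw [setIntegral_congr_fun measurableSet_Ioi
    (fun y hy => ((hpoint y hy).tsum_eq.symm : _)),
    integral_tsum hfmeas hfin, tsum_congr hterm, tsum_mul_left]
end

section
/- Let Υ₁ and Υ₂ be independent random variables with α-μ power densities with parameters (α₁, μ₁, β₁) and (α₂, μ₂, β₂) and suppose α₁ = α₂ = α. Then the density of X = Υ₁/Υ₂ is f_X(x) = (α/2) · Γ(μ₁+μ₂)/(Γ(μ₁)Γ(μ₂)) · (β₂/β₁)^(αμ₁/2) x^(αμ₁/2 − 1) · (1 + (xβ₂/β₁)^(α/2))^(−μ₁−μ₂) for x > 0. -/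
open MeasureTheory Real Set

theorem ratio_density_equal_alpha
    (α μ₁ β₁ μ₂ β₂ : ℝ)
    (hα : 0 < α) (hμ₁ : 0 < μ₁) (hβ₁ : 0 < β₁) (hμ₂ : 0 < μ₂) (hβ₂ : 0 < β₂)
    (x : ℝ) (hx : 0 < x) :
    (∫ y in Ioi (0:ℝ),
        y * alphaMuPowerPDF α μ₁ β₁ (x * y) * alphaMuPowerPDF α μ₂ β₂ y) =
      α / 2 * (Real.Gamma (μ₁ + μ₂) / (Real.Gamma μ₁ * Real.Gamma μ₂)) *
        (β₂ / β₁) ^ (α * μ₁ / 2) * x ^ (α * μ₁ / 2 - 1) *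
        (1 + (x * β₂ / β₁) ^ (α / 2)) ^ (-μ₁ - μ₂) := by
  have ha0 : (0:ℝ) < α / 2 := by positivity
  set a : ℝ := α / 2 with ha
  set t : ℝ := (x * β₂ / β₁) ^ a with ht
  have ht0 : 0 < t := by positivity
  set c : ℝ := (x / β₁) ^ a + (1 / β₂) ^ a with hc
  have hc0 : 0 < c := by positivity
  set K : ℝ := a ^ 2 * x ^ (a * μ₁ - 1) /
      (β₁ ^ (a * μ₁) * β₂ ^ (a * μ₂) * (Real.Gamma μ₁ * Real.Gamma μ₂)) with hK
  have key : ∀ y ∈ Ioi (0:ℝ),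
      y * alphaMuPowerPDF α μ₁ β₁ (x * y) * alphaMuPowerPDF α μ₂ β₂ y
        = K * (y ^ (a * (μ₁ + μ₂) - 1) * Real.exp (-(c * y ^ a))) := by
    intro y hy
    have hy0 : (0:ℝ) < y := hy
    unfold alphaMuPowerPDF
    have e1 : (x * y) ^ (α * μ₁ / 2 - 1) = x ^ (a * μ₁ - 1) * y ^ (a * μ₁ - 1) := by
      rw [Real.mul_rpow hx.le hy0.le, ha]; ring_nf
    have e2 : (x * y / β₁) ^ (α / 2) = (x / β₁) ^ a * y ^ a := by
      rw [show x * y / β₁ = (x / β₁) * y by ring, Real.mul_rpow (by positivity) hy0.le]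
    have e3 : (y / β₂) ^ (α / 2) = (1 / β₂) ^ a * y ^ a := by
      rw [show y / β₂ = (1 / β₂) * y by ring, Real.mul_rpow (by positivity) hy0.le]
    rw [e2, e3]
    have e4 : y * (α / 2 * (x ^ (a * μ₁ - 1) * y ^ (a * μ₁ - 1)) /
          (β₁ ^ (α * μ₁ / 2) * Real.Gamma μ₁)) *
        (α / 2 * y ^ (α * μ₂ / 2 - 1) / (β₂ ^ (α * μ₂ / 2) * Real.Gamma μ₂))
        = K * (y * y ^ (a * μ₁ - 1) * y ^ (a * μ₂ - 1)) := by
      rw [hK]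
      have : α * μ₁ / 2 = a * μ₁ := by rw [ha]; ring
      rw [this]
      have : α * μ₂ / 2 = a * μ₂ := by rw [ha]; ring
      rw [this]
      field_simp
      ring
    calc y * (α / 2 * (x * y) ^ (α * μ₁ / 2 - 1) / (β₁ ^ (α * μ₁ / 2) * Real.Gamma μ₁) *
            Real.exp (-((x / β₁) ^ a * y ^ a))) *
          (α / 2 * y ^ (α * μ₂ / 2 - 1) / (β₂ ^ (α * μ₂ / 2) * Real.Gamma μ₂) *
            Real.exp (-((1 / β₂) ^ a * y ^ a)))
        = (y * (α / 2 * (x * y) ^ (α * μ₁ / 2 - 1) / (β₁ ^ (α * μ₁ / 2) * Real.Gamma μ₁)) *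
            (α / 2 * y ^ (α * μ₂ / 2 - 1) / (β₂ ^ (α * μ₂ / 2) * Real.Gamma μ₂))) *
          Real.exp (-((x / β₁) ^ a * y ^ a) + -((1 / β₂) ^ a * y ^ a)) := by
          rw [Real.exp_add]; ring
      _ = K * (y * y ^ (a * μ₁ - 1) * y ^ (a * μ₂ - 1)) * Real.exp (-(c * y ^ a)) := by
          rw [e1, e4, hc]; ring_nf
      _ = K * (y ^ (a * (μ₁ + μ₂) - 1) * Real.exp (-(c * y ^ a))) := by
          rw [show y * y ^ (a * μ₁ - 1) * y ^ (a * μ₂ - 1)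
              = y ^ (1:ℝ) * y ^ (a * μ₁ - 1) * y ^ (a * μ₂ - 1) by rw [Real.rpow_one],
            ← Real.rpow_add hy0, ← Real.rpow_add hy0]
          ring_nf
  rw [setIntegral_congr_fun measurableSet_Ioi key, integral_const_mul]
  have hq : (-1:ℝ) < a * (μ₁ + μ₂) - 1 := by nlinarith [mul_pos ha0 (add_pos hμ₁ hμ₂)]
  have hint : (∫ y in Ioi (0:ℝ), y ^ (a * (μ₁ + μ₂) - 1) * Real.exp (-(c * y ^ a)))
      = c ^ (-(a * (μ₁ + μ₂) - 1 + 1) / a) * (1 / a) *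
        Real.Gamma ((a * (μ₁ + μ₂) - 1 + 1) / a) := by
    simpa [neg_mul] using integral_rpow_mul_exp_neg_mul_rpow ha0 hq hc0
  have hd1 : -(a * (μ₁ + μ₂) - 1 + 1) / a = -(μ₁ + μ₂) := by field_simp; ring
  have hd2 : (a * (μ₁ + μ₂) - 1 + 1) / a = μ₁ + μ₂ := by field_simp; ring
  rw [hint, hd1, hd2]
  -- evaluate c ^ (-(μ₁+μ₂))
  have hct : (1 / β₂) ^ a * t = (x / β₁) ^ a := by
    rw [ht, ← Real.mul_rpow (by positivity) (by positivity)]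
    congr 1; field_simp
  have hcform : c = (1 / β₂) ^ a * (1 + t) := by
    rw [hc, mul_add, mul_one, hct]; ring
  have h1t : (0:ℝ) ≤ 1 + t := by positivity
  have hcpow : c ^ (-(μ₁ + μ₂)) = β₂ ^ (a * μ₁) * β₂ ^ (a * μ₂) * (1 + t) ^ (-(μ₁ + μ₂)) := by
    rw [hcform, Real.mul_rpow (by positivity) h1t, ← Real.rpow_mul (by positivity : (0:ℝ) ≤ 1/β₂),
      show a * -(μ₁ + μ₂) = -(a * (μ₁ + μ₂)) by ring, one_div,
      Real.inv_rpow hβ₂.le, ← Real.rpow_neg hβ₂.le, neg_neg,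
      show a * (μ₁ + μ₂) = a * μ₁ + a * μ₂ by ring, Real.rpow_add hβ₂]
  rw [hcpow]
  have hm1 : α * μ₁ / 2 = a * μ₁ := by rw [ha]; ring
  rw [hm1, show -μ₁ - μ₂ = -(μ₁ + μ₂) by ring,
    Real.div_rpow hβ₂.le hβ₁.le, hK]
  have hG1 := Real.Gamma_pos_of_pos hμ₁
  have hG2 := Real.Gamma_pos_of_pos hμ₂
  have hb1 : (0:ℝ) < β₁ ^ (a * μ₁) := by positivity
  have hb2 : (0:ℝ) < β₂ ^ (a * μ₂) := by positivity
  rw [ha]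
  field_simp
end

section
/- Let R₁ and R₂ be independent with α-μ densities with parameters (α₁, μ₁, r̂₁) and (α₂, μ₂, r̂₂), and set X = R₁²/R₂². Then for every real n with −μ₁α₁/2 < n < μ₂α₂/2, E[X^n] = r̂₁^(2n) r̂₂^(−2n) μ₁^(−2n/α₁) μ₂^(2n/α₂) Γ(μ₁ + 2n/α₁) Γ(μ₂ − 2n/α₂) / (Γ(μ₁) Γ(μ₂)). -/
open MeasureTheory ProbabilityTheory Real Set

/-- The α-μ envelope density. -/
noncomputable def alphaMuPDF (α μ rh r : ℝ) : ℝ :=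
  α * μ ^ μ * r ^ (α * μ - 1) / (rh ^ (α * μ) * Real.Gamma μ) *
    Real.exp (-μ * r ^ α / rh ^ α)

lemma alphaMuPDF_measurable (α μ rh : ℝ) : Measurable (alphaMuPDF α μ rh) := by
  unfold alphaMuPDF; fun_prop

lemma alphaMuPDF_nonneg (α μ rh : ℝ) (hα : 0 < α) (hμ : 0 < μ) (hrh : 0 < rh) {r : ℝ}
    (hr : 0 < r) : 0 ≤ alphaMuPDF α μ rh r := by
  unfold alphaMuPDF
  have h1 : 0 < Real.Gamma μ := Real.Gamma_pos_of_pos hμ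
  positivity

lemma alphaMu_moment (α μ rh p : ℝ) (hα : 0 < α) (hμ : 0 < μ) (hrh : 0 < rh)
    (hp : 0 < μ + p / α) :
    ∫ r in Ioi (0:ℝ), alphaMuPDF α μ rh r * r ^ p
      = rh ^ p * μ ^ (-p / α) * Real.Gamma (μ + p / α) / Real.Gamma μ := by
  have hb : 0 < μ / rh ^ α := by positivity
  have hpos : 0 < α * μ + p := by
    have := mul_pos hα hp
    rw [mul_add, mul_div_cancel₀ _ hα.ne'] at this
    linarith
  have hq : (-1:ℝ) < α * μ - 1 + p := by linarith
  have key := integral_rpow_mul_exp_neg_mul_rpow hα hq hb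
  have congr1 : ∀ x ∈ Ioi (0:ℝ), alphaMuPDF α μ rh x * x ^ p =
      (α * μ ^ μ / (rh ^ (α * μ) * Real.Gamma μ)) *
        (x ^ (α * μ - 1 + p) * Real.exp (-(μ / rh ^ α) * x ^ α)) := by
    intro x hx
    unfold alphaMuPDF
    rw [Real.rpow_add hx]
    have harg : -μ * x ^ α / rh ^ α = -(μ / rh ^ α) * x ^ α := by ring
    rw [harg]; ring
  rw [setIntegral_congr_fun measurableSet_Ioi congr1, integral_const_mul, key]
  have he2 : -(α * μ - 1 + p + 1) / α = -(μ + p / α) := by field_simp; ring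
  have he : (α * μ - 1 + p + 1) / α = μ + p / α := by field_simp; ring
  rw [he2, he]
  have hαs : α * (μ + p / α) = α * μ + p := by
    rw [mul_add, mul_div_cancel₀ _ hα.ne']
  have h1 : (μ / rh ^ α) ^ (-(μ + p / α)) =
      (rh ^ (α * μ) * rh ^ p) / (μ ^ μ * μ ^ (p / α)) := by
    rw [Real.rpow_neg hb.le, Real.div_rpow hμ.le (by positivity), inv_div,
      ← Real.rpow_mul hrh.le, hαs, Real.rpow_add hrh, Real.rpow_add hμ]
  rw [h1, neg_div, Real.rpow_neg hμ.le]
  have hΓ : 0 < Real.Gamma μ := Real.Gamma_pos_of_pos hμ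
  have h2 : (0:ℝ) < μ ^ μ := Real.rpow_pos_of_pos hμ _
  have h3 : (0:ℝ) < μ ^ (p / α) := Real.rpow_pos_of_pos hμ _
  have h4 : (0:ℝ) < rh ^ (α * μ) := Real.rpow_pos_of_pos hrh _
  field_simp

lemma comp_alphaMu_moment {Ω : Type*} [MeasureSpace Ω] [IsProbabilityMeasure (ℙ : Measure Ω)]
    (α μ rh : ℝ) (hα : 0 < α) (hμ : 0 < μ) (hrh : 0 < rh)
    (R : Ω → ℝ) (hm : Measurable R)
    (hd : Measure.map R ℙ = volume.withDensity
      (fun r => ENNReal.ofReal ((Ioi (0:ℝ)).indicator (alphaMuPDF α μ rh) r)))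
    (p : ℝ) (hp : 0 < μ + 2 * p / α) :
    ∫ ω, ((R ω) ^ 2) ^ p ∂ℙ
      = rh ^ (2 * p) * μ ^ (-(2 * p) / α) * Real.Gamma (μ + 2 * p / α) / Real.Gamma μ := by
  have hnn : ∀ x, 0 ≤ (Ioi (0:ℝ)).indicator (alphaMuPDF α μ rh) x :=
    fun x => Set.indicator_nonneg (fun r hr => alphaMuPDF_nonneg α μ rh hα hμ hrh hr) x
  have hgm : Measurable fun x : ℝ => (x ^ 2) ^ p := by fun_prop
  have h1 : ∫ ω, ((R ω) ^ 2) ^ p ∂ℙ = ∫ x, (x ^ 2) ^ p ∂(Measure.map R ℙ) :=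
    (integral_map hm.aemeasurable hgm.aestronglyMeasurable).symm
  rw [h1, hd]
  have hco : (fun r => ENNReal.ofReal ((Ioi (0:ℝ)).indicator (alphaMuPDF α μ rh) r)) =
      (fun r => ((((Ioi (0:ℝ)).indicator (alphaMuPDF α μ rh) r).toNNReal : NNReal) : ENNReal)) := rfl
  have hfm : Measurable fun r : ℝ =>
      ((Ioi (0:ℝ)).indicator (alphaMuPDF α μ rh) r).toNNReal :=
    ((alphaMuPDF_measurable α μ rh).indicator measurableSet_Ioi).real_toNNReal
  rw [hco, integral_withDensity_eq_integral_smul hfm (fun x => (x ^ 2) ^ p)]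
  have h3 : (fun x : ℝ =>
        (((Ioi (0:ℝ)).indicator (alphaMuPDF α μ rh) x).toNNReal : NNReal) • (x ^ 2) ^ p) =
      fun x => (Ioi (0:ℝ)).indicator (fun r => alphaMuPDF α μ rh r * (r ^ 2) ^ p) x := by
    funext x
    rw [NNReal.smul_def, Real.coe_toNNReal _ (hnn x)]
    by_cases hx : x ∈ Ioi (0:ℝ)
    · simp [Set.indicator_of_mem hx]
    · simp [Set.indicator_of_notMem hx]
  rw [h3, integral_indicator measurableSet_Ioi]
  have h4 : ∀ x ∈ Ioi (0:ℝ),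
      alphaMuPDF α μ rh x * (x ^ 2) ^ p = alphaMuPDF α μ rh x * x ^ (2 * p) := by
    intro x hx
    congr 1
    rw [← Real.rpow_natCast x 2, ← Real.rpow_mul (le_of_lt hx)]
    norm_num
  rw [setIntegral_congr_fun measurableSet_Ioi h4]
  exact alphaMu_moment α μ rh (2 * p) hα hμ hrh hp

theorem ratio_squared_alphaMu_moments
    {Ω : Type*} [MeasureSpace Ω] [IsProbabilityMeasure (ℙ : Measure Ω)]
    (α₁ μ₁ rh₁ α₂ μ₂ rh₂ : ℝ)
    (hα₁ : 0 < α₁) (hμ₁ : 0 < μ₁) (hr₁ : 0 < rh₁)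
    (hα₂ : 0 < α₂) (hμ₂ : 0 < μ₂) (hr₂ : 0 < rh₂)
    (R₁ R₂ : Ω → ℝ) (hm₁ : Measurable R₁) (hm₂ : Measurable R₂)
    (hind : IndepFun R₁ R₂ ℙ)
    (hd₁ : Measure.map R₁ ℙ = volume.withDensity
      (fun r => ENNReal.ofReal ((Ioi (0:ℝ)).indicator (alphaMuPDF α₁ μ₁ rh₁) r)))
    (hd₂ : Measure.map R₂ ℙ = volume.withDensity
      (fun r => ENNReal.ofReal ((Ioi (0:ℝ)).indicator (alphaMuPDF α₂ μ₂ rh₂) r)))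
    (n : ℝ) (hn₁ : -(μ₁ * α₁ / 2) < n) (hn₂ : n < μ₂ * α₂ / 2) :
    ∫ ω, ((R₁ ω) ^ 2 / (R₂ ω) ^ 2) ^ n ∂ℙ =
      rh₁ ^ (2 * n) * rh₂ ^ (-(2 * n)) * μ₁ ^ (-(2 * n) / α₁) * μ₂ ^ (2 * n / α₂) *
        Real.Gamma (μ₁ + 2 * n / α₁) * Real.Gamma (μ₂ - 2 * n / α₂) /
        (Real.Gamma μ₁ * Real.Gamma μ₂) := by
  have hp₁ : 0 < μ₁ + 2 * n / α₁ := by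
    have h : 0 < μ₁ * α₁ + 2 * n := by linarith
    have := div_pos h hα₁
    have heq : (μ₁ * α₁ + 2 * n) / α₁ = μ₁ + 2 * n / α₁ := by field_simp
    linarith [heq ▸ this]
  have hp₂ : 0 < μ₂ + 2 * (-n) / α₂ := by
    have h : 0 < μ₂ * α₂ + 2 * (-n) := by linarith
    have := div_pos h hα₂
    have heq : (μ₂ * α₂ + 2 * (-n)) / α₂ = μ₂ + 2 * (-n) / α₂ := by field_simp
    linarith [heq ▸ this]
  have e1 := comp_alphaMu_moment α₁ μ₁ rh₁ hα₁ hμ₁ hr₁ R₁ hm₁ hd₁ n hp₁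
  have e2 := comp_alphaMu_moment α₂ μ₂ rh₂ hα₂ hμ₂ hr₂ R₂ hm₂ hd₂ (-n) hp₂
  have hsplit : (fun ω => ((R₁ ω) ^ 2 / (R₂ ω) ^ 2) ^ n) =
      fun ω => ((R₁ ω) ^ 2) ^ n * ((R₂ ω) ^ 2) ^ (-n) := by
    funext ω
    rw [Real.div_rpow (sq_nonneg _) (sq_nonneg _), Real.rpow_neg (sq_nonneg _), div_eq_mul_inv]
  have hmX : Measurable fun x : ℝ => (x ^ 2) ^ n := by fun_prop
  have hmY : Measurable fun x : ℝ => (x ^ 2) ^ (-n) := by fun_prop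
  have hi : IndepFun (fun ω => ((R₁ ω) ^ 2) ^ n) (fun ω => ((R₂ ω) ^ 2) ^ (-n)) ℙ :=
    hind.comp hmX hmY
  have hmul : ∫ ω, ((R₁ ω) ^ 2) ^ n * ((R₂ ω) ^ 2) ^ (-n) ∂ℙ =
      (∫ ω, ((R₁ ω) ^ 2) ^ n ∂ℙ) * ∫ ω, ((R₂ ω) ^ 2) ^ (-n) ∂ℙ := by
    exact hi.integral_fun_mul_eq_mul_integral ((hmX.comp hm₁).aestronglyMeasurable)
      ((hmY.comp hm₂).aestronglyMeasurable)
  calc ∫ ω, ((R₁ ω) ^ 2 / (R₂ ω) ^ 2) ^ n ∂ℙ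
      = ∫ ω, ((R₁ ω) ^ 2) ^ n * ((R₂ ω) ^ 2) ^ (-n) ∂ℙ := by rw [hsplit]
    _ = (∫ ω, ((R₁ ω) ^ 2) ^ n ∂ℙ) * ∫ ω, ((R₂ ω) ^ 2) ^ (-n) ∂ℙ := hmul
    _ = _ := by
        rw [e1, e2, show (2 : ℝ) * -n = -(2 * n) by ring,
          show -(-(2 * n)) / α₂ = 2 * n / α₂ by ring,
          show μ₂ + -(2 * n) / α₂ = μ₂ - 2 * n / α₂ by ring]
        ring
end

section
/- Let Υ₁ and Υ₂ be independent with α-μ power densities with parameters (α₁, μ₁, β₁), (α₂, μ₂, β₂), and k = α₁/α₂ ≤ 1. Then the CDF of X = Υ₁/Υ₂ admits the convergent series F_X(x) = (1/(Γ(μ₁)Γ(μ₂))) z^(μ₁) Σ_{h=0}^∞ (−1)^h z^h Γ(k(h+μ₁)+μ₂) / ((h+μ₁) Γ(h+1)), where z = (xβ₂/β₁)^(α₁/2), valid for all x > 0 when k < 1 (and for z < 1 when k = 1). -/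
open MeasureTheory ProbabilityTheory Real Set Filter Topology

section Aux


lemma myIntOn {p q b : ℝ} (hp : 0 < p) (hq : -1 < q) (hb : 0 < b) :
    IntegrableOn (fun x : ℝ => x ^ q * Real.exp (-b * x ^ p)) (Ioi 0) := by
  set s : ℝ := (q + 1) / p with hs
  have hs0 : 0 < s := div_pos (by linarith) hp
  have hps : p * s = q + 1 := by rw [hs]; field_simp
  have h0 : IntegrableOn (fun t : ℝ => Real.exp (-t) * t ^ (s - 1)) (Ioi 0) :=
    Real.GammaIntegral_convergent hs0
  have h1 : IntegrableOn (fun t : ℝ => Real.exp (-(b * t)) * (b * t) ^ (s - 1)) (Ioi 0) := by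
    have := (integrableOn_Ioi_comp_mul_left_iff
      (fun t : ℝ => Real.exp (-t) * t ^ (s - 1)) 0 hb).mpr (by simpa using h0)
    simpa using this
  have h1' : IntegrableOn (fun t : ℝ => b ^ (s - 1) • (t ^ (s - 1) * Real.exp (-(b * t)))) (Ioi 0) := by
    refine h1.congr_fun (fun t ht => ?_) measurableSet_Ioi
    beta_reduce; rw [mul_rpow hb.le (le_of_lt ht)]
    simp only [smul_eq_mul]; ring
  have h2 : IntegrableOn (fun t : ℝ => t ^ (s - 1) * Real.exp (-(b * t))) (Ioi 0) :=
    (integrable_smul_iff (by positivity : (b : ℝ) ^ (s - 1) ≠ 0) _).mp h1'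
  have h3 := (integrableOn_Ioi_comp_rpow_iff'
    (fun t : ℝ => t ^ (s - 1) * Real.exp (-(b * t))) hp.ne').mpr h2
  refine h3.congr_fun (fun y hy => ?_) measurableSet_Ioi
  have hy0 : (0:ℝ) < y := hy
  simp only [smul_eq_mul]
  rw [← rpow_mul hy0.le, ← mul_assoc, ← rpow_add hy0, neg_mul]
  congr 2
  nlinarith [hps]

lemma divEq {p b : ℝ} (hp : 0 < p) (hb : 0 < b) {y : ℝ} (hy : 0 ≤ y) :
    -((y / b) ^ p) = -(b ^ p)⁻¹ * y ^ p := by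
  rw [div_rpow hy hb.le, neg_mul, div_eq_inv_mul]

lemma myIntOnDiv {p q b : ℝ} (hp : 0 < p) (hq : -1 < q) (hb : 0 < b) :
    IntegrableOn (fun y : ℝ => y ^ q * Real.exp (-((y / b) ^ p))) (Ioi 0) := by
  refine (myIntOn hp hq (b := (b ^ p)⁻¹) (by positivity)).congr_fun (fun y hy => ?_)
    measurableSet_Ioi
  rw [divEq hp hb (le_of_lt hy)]

lemma myIntDiv {p q b : ℝ} (hp : 0 < p) (hq : -1 < q) (hb : 0 < b) :
    ∫ y in Ioi (0:ℝ), y ^ q * Real.exp (-((y / b) ^ p))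
      = b ^ (q + 1) * (1 / p) * Real.Gamma ((q + 1) / p) := by
  have : ∫ y in Ioi (0:ℝ), y ^ q * Real.exp (-((y / b) ^ p))
      = ∫ y in Ioi (0:ℝ), y ^ q * Real.exp (-(b ^ p)⁻¹ * y ^ p) := by
    refine setIntegral_congr_fun measurableSet_Ioi (fun y hy => ?_)
    rw [divEq hp hb (le_of_lt hy)]
  rw [this, integral_rpow_mul_exp_neg_mul_rpow hp hq (by positivity)]
  congr 2
  rw [← rpow_neg_one (b ^ p), ← rpow_mul hb.le, ← rpow_mul hb.le]
  congr 1
  field_simp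

lemma pdf_eq_moment {a m b e : ℝ} (hb : 0 < b) {y : ℝ} (hy : 0 < y) :
    y ^ e * alphaMuPowerPDF a m b y
      = (a / 2 / (b ^ (a*m/2) * Real.Gamma m)) *
        (y ^ (a*m/2 - 1 + e) * Real.exp (-((y/b)^(a/2)))) := by
  unfold alphaMuPowerPDF
  rw [show a*m/2 - 1 + e = a*m/2 - 1 + e from rfl, rpow_add hy]
  ring

lemma pdf_moment_integrableOn {a m b e : ℝ} (ha : 0 < a) (hm : 0 < m) (hb : 0 < b) (he : 0 ≤ e) :
    IntegrableOn (fun y => y ^ e * alphaMuPowerPDF a m b y) (Ioi 0) := by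
  have h := ((myIntOnDiv (half_pos ha) (q := a*m/2-1+e) (by nlinarith) hb)).const_mul
    (a / 2 / (b ^ (a*m/2) * Real.Gamma m))
  exact IntegrableOn.congr_fun h (fun y hy => (pdf_eq_moment hb hy).symm) measurableSet_Ioi

lemma pdf_moment {a m b e : ℝ} (ha : 0 < a) (hm : 0 < m) (hb : 0 < b) (he : 0 ≤ e) :
    ∫ y in Ioi (0:ℝ), y ^ e * alphaMuPowerPDF a m b y
      = b ^ e * Real.Gamma (m + 2*e/a) / Real.Gamma m := by
  rw [setIntegral_congr_fun measurableSet_Ioi (fun y hy => pdf_eq_moment hb hy),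
    integral_const_mul, myIntDiv (half_pos ha) (by nlinarith) hb]
  have h1 : (a*m/2 - 1 + e + 1) / (a/2) = m + 2*e/a := by field_simp; ring
  have h2 : a*m/2 - 1 + e + 1 = a*m/2 + e := by ring
  rw [h1, h2, rpow_add hb]
  have hΓ : Real.Gamma m ≠ 0 := (Real.Gamma_pos_of_pos hm).ne'
  have hbp : (b:ℝ) ^ (a*m/2) ≠ 0 := by positivity
  field_simp


lemma myGammaAdd {s k : ℝ} (hs : 0 < s) (hk0 : 0 ≤ k) (hk1 : k ≤ 1) :
    Real.Gamma (s + k) ≤ Real.Gamma s * s ^ k := by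
  have hΓs : 0 < Real.Gamma s := Real.Gamma_pos_of_pos hs
  have hconv := Real.convexOn_log_Gamma.2 (mem_Ioi.mpr hs)
    (mem_Ioi.mpr (by linarith : (0:ℝ) < s + 1)) (by linarith : (0:ℝ) ≤ 1 - k) hk0 (by ring)
  simp only [Function.comp_apply, smul_eq_mul] at hconv
  have harg : (1 - k) * s + k * (s + 1) = s + k := by ring
  rw [harg, Real.Gamma_add_one hs.ne', Real.log_mul hs.ne' hΓs.ne'] at hconv
  have hle : Real.log (Real.Gamma (s + k)) ≤ Real.log (Real.Gamma s) + k * Real.log s := by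
    nlinarith
  have hΓsk : 0 < Real.Gamma (s + k) := Real.Gamma_pos_of_pos (by linarith)
  calc Real.Gamma (s + k) = Real.exp (Real.log (Real.Gamma (s + k))) := (Real.exp_log hΓsk).symm
    _ ≤ Real.exp (Real.log (Real.Gamma s) + k * Real.log s) := Real.exp_le_exp.mpr hle
    _ = Real.Gamma s * s ^ k := by
        rw [Real.exp_add, Real.exp_log hΓs, Real.rpow_def_of_pos hs, mul_comm (Real.log s) k]

lemma myRatioBound {k μ₁ μ₂ z : ℝ} (hk0 : 0 < k) (hk1 : k ≤ 1) (hμ₁ : 0 < μ₁) (hμ₂ : 0 < μ₂)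
    (hz : 0 < z) (hz1 : k = 1 → z < 1) :
    ∃ r : ℝ, r < 1 ∧ ∀ᶠ h : ℕ in atTop,
      z * (k*((h:ℝ)+μ₁)+μ₂) ^ k / ((h:ℝ)+1) ≤ r := by
  rcases eq_or_lt_of_le hk1 with hk | hk
  · subst hk
    have hzlt : z < 1 := hz1 rfl
    refine ⟨(z+1)/2, by linarith, ?_⟩
    have htend : Tendsto (fun h : ℕ => z * ((1:ℝ)*((h:ℝ)+μ₁)+μ₂) ^ (1:ℝ) / ((h:ℝ)+1)) atTop (𝓝 z) := by
      have h0 : Tendsto (fun h : ℕ => ((h:ℝ)+1)) atTop atTop :=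
        (tendsto_natCast_atTop_atTop (R := ℝ)).atTop_add tendsto_const_nhds
      have h2 : Tendsto (fun h : ℕ => (μ₁ + μ₂ - 1) / ((h:ℝ)+1)) atTop (𝓝 0) :=
        tendsto_const_nhds.div_atTop h0
      have h3 : Tendsto (fun h : ℕ => z * (1 + (μ₁ + μ₂ - 1) / ((h:ℝ)+1))) atTop (𝓝 (z * (1+0))) :=
        (tendsto_const_nhds.add h2).const_mul z
      rw [add_zero, mul_one] at h3
      refine h3.congr (fun h => ?_)
      have hne : ((h:ℝ)+1) ≠ 0 := by positivity
      rw [rpow_one, mul_div_assoc]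
      congr 1
      field_simp
      ring
    exact (htend.eventually_lt_const (by linarith : z < (z+1)/2)).mono fun h hh => hh.le
  · refine ⟨1/2, by norm_num, ?_⟩
    have hev1 : ∀ᶠ h : ℕ in atTop, k*((h:ℝ)+μ₁)+μ₂ ≤ (h:ℝ)+1 := by
      filter_upwards [(tendsto_natCast_atTop_atTop (R := ℝ)).eventually_ge_atTop
        ((k*μ₁+μ₂-1)/(1-k))] with h hh
      have := (div_le_iff₀ (by linarith : (0:ℝ) < 1-k)).mp hh
      nlinarith
    have htend : Tendsto (fun h : ℕ => z * ((h:ℝ)+1) ^ (k-1)) atTop (𝓝 (z * 0)) := by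
      have h0 : Tendsto (fun h : ℕ => ((h:ℝ)+1)) atTop atTop :=
        (tendsto_natCast_atTop_atTop (R := ℝ)).atTop_add tendsto_const_nhds
      have := (tendsto_rpow_neg_atTop (by linarith : (0:ℝ) < 1-k)).comp h0
      simp only [Function.comp_def] at this
      rw [show -(1-k) = k-1 by ring] at this
      exact this.const_mul z
    rw [mul_zero] at htend
    filter_upwards [hev1, htend.eventually_lt_const (by norm_num : (0:ℝ) < 1/2)] with h hh1 hh2
    have hb1 : (0:ℝ) < (h:ℝ)+1 := by positivity
    have hs0 : (0:ℝ) < k*((h:ℝ)+μ₁)+μ₂ := by positivity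
    have hle : (k*((h:ℝ)+μ₁)+μ₂) ^ k ≤ ((h:ℝ)+1) ^ k := rpow_le_rpow hs0.le hh1 hk0.le
    have hstep : z * (k*((h:ℝ)+μ₁)+μ₂) ^ k / ((h:ℝ)+1) ≤ z * ((h:ℝ)+1) ^ k / ((h:ℝ)+1) := by
      gcongr
    refine hstep.trans (le_of_lt ?_)
    have heq : z * ((h:ℝ)+1) ^ k / ((h:ℝ)+1) = z * ((h:ℝ)+1) ^ (k-1) := by
      rw [rpow_sub hb1, rpow_one]; ring
    rw [heq]; exact hh2

lemma mySummable {k μ₁ μ₂ z : ℝ} (hk0 : 0 < k) (hk1 : k ≤ 1) (hμ₁ : 0 < μ₁) (hμ₂ : 0 < μ₂)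
    (hz : 0 < z) (hz1 : k = 1 → z < 1) :
    Summable (fun h : ℕ => z ^ h * Real.Gamma (k*((h:ℝ)+μ₁)+μ₂) / (((h:ℝ)+μ₁) * (h.factorial:ℝ))) := by
  set b : ℕ → ℝ := fun h => z ^ h * Real.Gamma (k*((h:ℝ)+μ₁)+μ₂) / (((h:ℝ)+μ₁) * (h.factorial:ℝ))
    with hbdef
  have hs : ∀ h : ℕ, (0:ℝ) < k*((h:ℝ)+μ₁)+μ₂ := fun h => by positivity
  have hbpos : ∀ h, 0 < b h := fun h => by
    have h1 := Real.Gamma_pos_of_pos (hs h)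
    have h2 : (0:ℝ) < (h.factorial : ℝ) := by positivity
    positivity
  have key : ∀ h : ℕ, b (h+1) ≤ (z * (k*((h:ℝ)+μ₁)+μ₂) ^ k / ((h:ℝ)+1)) * b h := by
    intro h
    set s : ℝ := k*((h:ℝ)+μ₁)+μ₂ with hsdef
    have hs0 : 0 < s := hs h
    have hΓpos : 0 < Real.Gamma s := Real.Gamma_pos_of_pos hs0
    have hΓle : Real.Gamma (s + k) ≤ Real.Gamma s * s ^ k := myGammaAdd hs0 hk0.le hk1
    have harg : k*(((h+1:ℕ):ℝ)+μ₁)+μ₂ = s + k := by push_cast; ring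
    have h1 : b (h+1) = z ^ (h+1) * Real.Gamma (s+k) /
        ((((h:ℝ)+1)+μ₁) * (((h:ℝ)+1) * (h.factorial:ℝ))) := by
      rw [hbdef]; simp only; rw [harg, Nat.factorial_succ]; push_cast; ring_nf
    rw [h1]
    have step1 : z ^ (h+1) * Real.Gamma (s+k) / ((((h:ℝ)+1)+μ₁) * (((h:ℝ)+1) * (h.factorial:ℝ)))
        ≤ z ^ (h+1) * (Real.Gamma s * s ^ k) / ((((h:ℝ))+μ₁) * (((h:ℝ)+1) * (h.factorial:ℝ))) := by
      refine div_le_div₀ (by positivity) ?_ (by positivity) ?_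
      · exact mul_le_mul_of_nonneg_left hΓle (by positivity)
      · exact mul_le_mul_of_nonneg_right (by linarith) (by positivity)
    refine step1.trans (le_of_eq ?_)
    rw [hbdef]; simp only [← hsdef]
    have hf : ((h.factorial:ℝ)) ≠ 0 := by positivity
    field_simp
    ring
  obtain ⟨r, hr1, hev⟩ := myRatioBound hk0 hk1 hμ₁ hμ₂ hz hz1
  refine summable_of_ratio_norm_eventually_le hr1 ?_
  filter_upwards [hev] with h hh
  rw [Real.norm_eq_abs, Real.norm_eq_abs, abs_of_pos (hbpos _), abs_of_pos (hbpos _)]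
  calc b (h+1) ≤ (z * (k*((h:ℝ)+μ₁)+μ₂) ^ k / ((h:ℝ)+1)) * b h := key h
    _ ≤ r * b h := mul_le_mul_of_nonneg_right hh (hbpos h).le


lemma expTsum (y : ℝ) : Real.exp y = ∑' n : ℕ, y ^ n / (n.factorial : ℝ) := by
  rw [Real.exp_eq_exp_ℝ, NormedSpace.exp_eq_tsum_div]

lemma powIntOn {t r : ℝ} (ht : 0 < t) (hr : -1 < r) :
    IntegrableOn (fun u : ℝ => u ^ r) (Ioc 0 t) :=
  (intervalIntegrable_iff_integrableOn_Ioc_of_le ht.le).mp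
    (intervalIntegral.intervalIntegrable_rpow' hr)

lemma powIntVal {t r : ℝ} (ht : 0 < t) (hr : -1 < r) :
    ∫ u in Ioc (0:ℝ) t, u ^ r = t ^ (r+1) / (r+1) := by
  rw [← intervalIntegral.integral_of_le ht.le, integral_rpow (Or.inl hr),
    Real.zero_rpow (by linarith), sub_zero]

lemma myCdfSeries {a m b t : ℝ} (ha : 0 < a) (hm : 0 < m) (hb : 0 < b) (ht : 0 < t) :
    ∫ u in Ioc (0:ℝ) t, alphaMuPowerPDF a m b u
      = ∑' h : ℕ, (-1:ℝ)^h * ((t/b)^(a/2))^(m+(h:ℝ))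
          / (Real.Gamma m * ((m+(h:ℝ)) * (h.factorial:ℝ))) := by
  have hΓ : 0 < Real.Gamma m := Real.Gamma_pos_of_pos hm
  set p : ℝ := a/2 with hp
  have hp0 : 0 < p := half_pos ha
  set C₀ : ℝ := a/2 / (b ^ (a*m/2) * Real.Gamma m) with hC₀
  have hC₀pos : 0 < C₀ := by rw [hC₀]; positivity
  set F : ℕ → ℝ → ℝ := fun h u =>
    (C₀ * ((-1:ℝ)^h / (b ^ (p*(h:ℝ)) * (h.factorial:ℝ)))) * u ^ (a*m/2 - 1 + p*(h:ℝ)) with hF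
  have hr : ∀ h : ℕ, (-1:ℝ) < a*m/2 - 1 + p*(h:ℝ) := fun h => by
    have : (0:ℝ) ≤ p*(h:ℝ) := by positivity
    nlinarith
  have hre : ∀ h : ℕ, a*m/2 - 1 + p*(h:ℝ) + 1 = p * (m + (h:ℝ)) := fun h => by
    rw [hp]; ring
  -- each term integrable
  have hFint : ∀ h : ℕ, IntegrableOn (F h) (Ioc 0 t) := fun h =>
    (powIntOn ht (hr h)).const_mul _
  -- norm integrals
  have hnorm : ∀ h : ℕ, ∫ u in Ioc (0:ℝ) t, ‖F h u‖
      = ((t/b) ^ p) ^ (m + (h:ℝ)) / (Real.Gamma m * ((m+(h:ℝ)) * (h.factorial:ℝ))) := by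
    intro h
    have h1 : ∀ u ∈ Ioc (0:ℝ) t, ‖F h u‖
        = (C₀ / (b ^ (p*(h:ℝ)) * (h.factorial:ℝ))) * u ^ (a*m/2 - 1 + p*(h:ℝ)) := by
      intro u hu
      have hu0 : 0 < u := hu.1
      have hsplit : C₀ * ((-1:ℝ)^h / (b ^ (p*(h:ℝ)) * (h.factorial:ℝ))) * u ^ (a*m/2-1+p*(h:ℝ))
          = (-1:ℝ)^h * ((C₀ / (b ^ (p*(h:ℝ)) * (h.factorial:ℝ))) * u ^ (a*m/2-1+p*(h:ℝ))) := by
        ring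
      rw [hF]
      simp only [Real.norm_eq_abs]
      rw [hsplit, abs_mul, abs_pow, abs_neg, abs_one, one_pow, one_mul,
        abs_of_nonneg (by positivity : (0:ℝ) ≤ (C₀ / (b ^ (p*(h:ℝ)) * (h.factorial:ℝ)))
          * u ^ (a*m/2-1+p*(h:ℝ)))]
    rw [setIntegral_congr_fun measurableSet_Ioc h1, integral_const_mul, powIntVal ht (hr h),
      hre h]
    -- algebra
    have hbp : (0:ℝ) < b ^ (p*(h:ℝ)) := by positivity
    have hmh : (0:ℝ) < m + (h:ℝ) := by positivity
    have hfa : (0:ℝ) < (h.factorial:ℝ) := by positivity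
    have htb : ((t/b) ^ p) ^ (m + (h:ℝ)) = t ^ (p*(m+(h:ℝ))) / b ^ (p*(m+(h:ℝ))) := by
      rw [← rpow_mul (by positivity : (0:ℝ) ≤ t/b), div_rpow ht.le hb.le]
    rw [htb, hC₀]
    have hbb : b ^ (p*(m+(h:ℝ))) = b ^ (a*m/2) * b ^ (p*(h:ℝ)) := by
      rw [← rpow_add hb]; congr 1; rw [hp]; ring
    rw [hbb]
    have h2 : a/2 = p := rfl
    field_simp
    ring
  -- summability of norm integrals
  have hsum : Summable (fun h : ℕ => ∫ u in Ioc (0:ℝ) t, ‖F h u‖) := by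
    have hs0 : 0 < (t/b) ^ p := rpow_pos_of_pos (by positivity) _
    refine Summable.of_nonneg_of_le (fun h => ?_) (fun h => ?_)
      (((Real.summable_pow_div_factorial ((t/b)^p)).mul_left (((t/b)^p)^m / (Real.Gamma m * m))))
    · rw [hnorm h]; positivity
    · rw [hnorm h]
      have he : ((t/b)^p) ^ (m+(h:ℝ)) = ((t/b)^p)^m * ((t/b)^p)^h := by
        rw [rpow_add hs0, rpow_natCast]
      rw [he]
      have heq2 : ((t/b)^p)^m / (Real.Gamma m * m) * (((t/b)^p)^h / (h.factorial:ℝ))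
          = ((t/b)^p)^m * ((t/b)^p)^h / (Real.Gamma m * (m * (h.factorial:ℝ))) := by
        ring
      rw [heq2]
      have hfa : (0:ℝ) < (h.factorial:ℝ) := by positivity
      have hden : Real.Gamma m * (m * (h.factorial:ℝ))
          ≤ Real.Gamma m * ((m + (h:ℝ)) * (h.factorial:ℝ)) := by
        have h0 : (0:ℝ) ≤ Real.Gamma m * (h.factorial:ℝ) * (h:ℝ) :=
          mul_nonneg (mul_nonneg hΓ.le hfa.le) (Nat.cast_nonneg h)
        nlinarith
      gcongr
      all_goals first | exact hden | positivity | exact Nat.cast_nonneg h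
  -- pointwise identity
  have hpt : ∀ u ∈ Ioc (0:ℝ) t, alphaMuPowerPDF a m b u = ∑' h : ℕ, F h u := by
    intro u hu
    have hu0 : 0 < u := hu.1
    have hbp : ∀ h : ℕ, (0:ℝ) < b ^ (p*(h:ℝ)) := fun h => by positivity
    have hterm : ∀ h : ℕ, F h u
        = (C₀ * u ^ (a*m/2-1)) * ((-((u/b)^p))^h / (h.factorial:ℝ)) := by
      intro h
      rw [hF]
      simp only
      rw [neg_pow ((u/b)^p) h, ← rpow_natCast ((u/b)^p) h,
        ← rpow_mul (by positivity : (0:ℝ) ≤ u/b),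
        div_rpow hu0.le hb.le, rpow_add hu0]
      have hfa : ((h.factorial:ℝ)) ≠ 0 := by positivity
      field_simp
    calc alphaMuPowerPDF a m b u
        = (C₀ * u ^ (a*m/2-1)) * Real.exp (-((u/b)^p)) := by
          unfold alphaMuPowerPDF; rw [hC₀, hp]; ring
      _ = (C₀ * u ^ (a*m/2-1)) * ∑' h : ℕ, (-((u/b)^p))^h / (h.factorial:ℝ) := by
          rw [← expTsum]
      _ = ∑' h : ℕ, (C₀ * u ^ (a*m/2-1)) * ((-((u/b)^p))^h / (h.factorial:ℝ)) := tsum_mul_left.symm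
      _ = ∑' h : ℕ, F h u := tsum_congr fun h => (hterm h).symm
  have hswap := MeasureTheory.integral_tsum_of_summable_integral_norm
    (μ := volume.restrict (Ioc 0 t)) hFint hsum
  rw [setIntegral_congr_fun measurableSet_Ioc hpt, ← hswap]
  refine tsum_congr fun h => ?_
  rw [hF]
  simp only
  rw [integral_const_mul, powIntVal ht (hr h), hre h]
  have hbp : (0:ℝ) < b ^ (p*(h:ℝ)) := by positivity
  have hmh : (0:ℝ) < m + (h:ℝ) := by positivity
  have hfa : (0:ℝ) < (h.factorial:ℝ) := by positivity
  have htb : ((t/b) ^ p) ^ (m + (h:ℝ)) = t ^ (p*(m+(h:ℝ))) / b ^ (p*(m+(h:ℝ))) := by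
    rw [← rpow_mul (by positivity : (0:ℝ) ≤ t/b), div_rpow ht.le hb.le]
  have hbb : b ^ (p*(m+(h:ℝ))) = b ^ (a*m/2) * b ^ (p*(h:ℝ)) := by
    rw [← rpow_add hb]; congr 1; rw [hp]; ring
  rw [htb, hC₀, hbb]
  field_simp
  ring

lemma pdf_measurable (a m b : ℝ) : Measurable (alphaMuPowerPDF a m b) := by
  unfold alphaMuPowerPDF
  fun_prop

lemma pdf_nonneg {a m b : ℝ} (ha : 0 < a) (hm : 0 < m) (hb : 0 < b) {γ : ℝ} (hγ : 0 < γ) :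
    0 ≤ alphaMuPowerPDF a m b γ := by
  unfold alphaMuPowerPDF
  have h1 : 0 < Real.Gamma m := Real.Gamma_pos_of_pos hm
  positivity

lemma pdf_integrableOn_Ioi {a m b : ℝ} (ha : 0 < a) (hm : 0 < m) (hb : 0 < b) :
    IntegrableOn (alphaMuPowerPDF a m b) (Ioi 0) := by
  refine IntegrableOn.congr_fun (pdf_moment_integrableOn ha hm hb (le_refl 0))
    (fun y hy => ?_) measurableSet_Ioi
  rw [rpow_zero, one_mul]

end Aux


set_option maxHeartbeats 2000000 in
theorem ratio_cdf_series
    {Ω : Type*} [MeasureSpace Ω] [IsProbabilityMeasure (ℙ : Measure Ω)]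
    (α₁ μ₁ β₁ α₂ μ₂ β₂ : ℝ)
    (hα₁ : 0 < α₁) (hμ₁ : 0 < μ₁) (hβ₁ : 0 < β₁)
    (hα₂ : 0 < α₂) (hμ₂ : 0 < μ₂) (hβ₂ : 0 < β₂)
    (Υ₁ Υ₂ : Ω → ℝ) (hm₁ : Measurable Υ₁) (hm₂ : Measurable Υ₂)
    (hind : IndepFun Υ₁ Υ₂ ℙ)
    (hd₁ : Measure.map Υ₁ ℙ = volume.withDensity
      (fun γ => ENNReal.ofReal ((Ioi (0:ℝ)).indicator (alphaMuPowerPDF α₁ μ₁ β₁) γ)))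
    (hd₂ : Measure.map Υ₂ ℙ = volume.withDensity
      (fun γ => ENNReal.ofReal ((Ioi (0:ℝ)).indicator (alphaMuPowerPDF α₂ μ₂ β₂) γ)))
    (k : ℝ) (hk : k = α₁ / α₂) (hk1 : k ≤ 1)
    (x : ℝ) (hx : 0 < x)
    (z : ℝ) (hz : z = (x * β₂ / β₁) ^ (α₁ / 2))
    (hz1 : k = 1 → z < 1) :
    Summable (fun h : ℕ =>
      (-1 : ℝ) ^ h * z ^ h * Real.Gamma (k * (h + μ₁) + μ₂) /
        ((h + μ₁) * Real.Gamma (h + 1))) ∧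
    (ℙ {ω | Υ₁ ω / Υ₂ ω ≤ x}).toReal =
      1 / (Real.Gamma μ₁ * Real.Gamma μ₂) * z ^ μ₁ *
        ∑' h : ℕ,
          (-1 : ℝ) ^ h * z ^ h * Real.Gamma (k * (h + μ₁) + μ₂) /
            ((h + μ₁) * Real.Gamma (h + 1)) := by
  have hΓμ₁ : 0 < Real.Gamma μ₁ := Real.Gamma_pos_of_pos hμ₁
  have hΓμ₂ : 0 < Real.Gamma μ₂ := Real.Gamma_pos_of_pos hμ₂
  have hk0 : 0 < k := hk ▸ div_pos hα₁ hα₂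
  have hz0 : 0 < z := hz ▸ rpow_pos_of_pos (by positivity) _
  have hS0 := mySummable hk0 hk1 hμ₁ hμ₂ hz0 hz1
  -- identify |series term| with positive series
  have habs : ∀ h : ℕ, |(-1 : ℝ) ^ h * z ^ h * Real.Gamma (k * ((h:ℝ) + μ₁) + μ₂) /
        (((h:ℝ) + μ₁) * Real.Gamma ((h:ℝ) + 1))|
      = z ^ h * Real.Gamma (k * ((h:ℝ) + μ₁) + μ₂) / (((h:ℝ) + μ₁) * (h.factorial:ℝ)) := by
    intro h
    have hΓk : 0 < Real.Gamma (k * ((h:ℝ) + μ₁) + μ₂) := Real.Gamma_pos_of_pos (by positivity)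
    rw [Real.Gamma_nat_eq_factorial, abs_div, abs_mul, abs_mul, abs_pow, abs_neg, abs_one,
      one_pow, one_mul, abs_of_pos (pow_pos hz0 h), abs_of_pos hΓk,
      abs_of_pos (by positivity : (0:ℝ) < ((h:ℝ) + μ₁) * (h.factorial:ℝ))]
  have hsummable : Summable (fun h : ℕ =>
      (-1 : ℝ) ^ h * z ^ h * Real.Gamma (k * ((h:ℝ) + μ₁) + μ₂) /
        (((h:ℝ) + μ₁) * Real.Gamma ((h:ℝ) + 1))) := by
    refine Summable.of_abs ?_
    exact hS0.congr fun h => (habs h).symm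
  refine ⟨hsummable, ?_⟩
  -- notation
  set p₁ : ℝ → ℝ := alphaMuPowerPDF α₁ μ₁ β₁ with hp₁
  set p₂ : ℝ → ℝ := alphaMuPowerPDF α₂ μ₂ β₂ with hp₂
  set g₁ : ℝ → ENNReal := fun γ => ENNReal.ofReal ((Ioi (0:ℝ)).indicator p₁ γ) with hg₁
  set g₂ : ℝ → ENNReal := fun γ => ENNReal.ofReal ((Ioi (0:ℝ)).indicator p₂ γ) with hg₂
  have hg₁m : Measurable g₁ :=
    ENNReal.measurable_ofReal.comp ((pdf_measurable _ _ _).indicator measurableSet_Ioi)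
  have hg₂m : Measurable g₂ :=
    ENNReal.measurable_ofReal.comp ((pdf_measurable _ _ _).indicator measurableSet_Ioi)
  haveI hprob₁ : IsProbabilityMeasure (volume.withDensity g₁) := by
    rw [← hd₁]; exact Measure.isProbabilityMeasure_map hm₁.aemeasurable
  haveI hprob₂ : IsProbabilityMeasure (volume.withDensity g₂) := by
    rw [← hd₂]; exact Measure.isProbabilityMeasure_map hm₂.aemeasurable
  have hSm : MeasurableSet {q : ℝ × ℝ | q.1 / q.2 ≤ x} :=
    measurableSet_le (measurable_fst.div measurable_snd) measurable_const
  have hmap : Measure.map (fun ω => (Υ₁ ω, Υ₂ ω)) ℙ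
      = (volume.withDensity g₁).prod (volume.withDensity g₂) := by
    rw [← hd₁, ← hd₂]
    exact (indepFun_iff_map_prod_eq_prod_map_map hm₁.aemeasurable hm₂.aemeasurable).mp hind
  have h1 : ℙ {ω | Υ₁ ω / Υ₂ ω ≤ x}
      = ((volume.withDensity g₁).prod (volume.withDensity g₂)) {q : ℝ × ℝ | q.1 / q.2 ≤ x} := by
    rw [← hmap, Measure.map_apply (hm₁.prodMk hm₂) hSm]
    rfl
  set f : ℝ → ENNReal := fun y => (volume.withDensity g₁) {u : ℝ | u / y ≤ x} with hf
  have h2 : ((volume.withDensity g₁).prod (volume.withDensity g₂)) {q : ℝ × ℝ | q.1 / q.2 ≤ x}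
      = ∫⁻ y, f y ∂(volume.withDensity g₂) := Measure.prod_apply_symm hSm
  have hfm : Measurable f := measurable_measure_prodMk_right (μ := volume.withDensity g₁) hSm
  have h3 : ∫⁻ y, f y ∂(volume.withDensity g₂) = ∫⁻ y, (g₂ * f) y ∂volume :=
    lintegral_withDensity_eq_lintegral_mul volume hg₂m hfm
  have h4 : ∫⁻ y, (g₂ * f) y ∂volume
      = ∫⁻ y in Ioi 0, ENNReal.ofReal (p₂ y) * f y ∂volume := by
    rw [← lintegral_indicator measurableSet_Ioi]
    congr 1
    funext y
    by_cases hy : y ∈ Ioi (0:ℝ)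
    · simp only [Pi.mul_apply, hg₂, indicator_of_mem hy]
    · simp only [Pi.mul_apply, hg₂, indicator_of_notMem hy, ENNReal.ofReal_zero, zero_mul]
  set F₁ : ℝ → ℝ := fun t => ∫ u in Ioc (0:ℝ) t, p₁ u with hF₁
  have hint₁ : IntegrableOn p₁ (Ioi 0) := pdf_integrableOn_Ioi hα₁ hμ₁ hβ₁
  have hF₁nonneg : ∀ t, 0 ≤ F₁ t := fun t =>
    setIntegral_nonneg measurableSet_Ioc (fun u hu => pdf_nonneg hα₁ hμ₁ hβ₁ hu.1)
  have hF₁mono : Monotone F₁ := by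
    intro t t' htt
    refine setIntegral_mono_set (hint₁.mono_set Ioc_subset_Ioi_self) ?_
      (HasSubset.Subset.eventuallyLE (Ioc_subset_Ioc_right htt))
    exact (ae_restrict_iff' measurableSet_Ioc).mpr
      (ae_of_all _ fun u hu => pdf_nonneg hα₁ hμ₁ hβ₁ hu.1)
  have hslice : ∀ y ∈ Ioi (0:ℝ), f y = ENNReal.ofReal (F₁ (x * y)) := by
    intro y hy
    have hy0 : (0:ℝ) < y := hy
    have hset : {u : ℝ | u / y ≤ x} = Iic (x * y) := by
      ext u
      rw [mem_setOf_eq, mem_Iic, div_le_iff₀ hy0, mul_comm]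
    rw [hf]
    simp only
    rw [hset, withDensity_apply _ measurableSet_Iic]
    have hind : ∫⁻ u in Iic (x*y), g₁ u ∂volume
        = ∫⁻ u in Ioc 0 (x*y), ENNReal.ofReal (p₁ u) ∂volume := by
      rw [← lintegral_indicator measurableSet_Iic, ← lintegral_indicator measurableSet_Ioc]
      congr 1
      funext u
      by_cases h1 : u ∈ Ioc (0:ℝ) (x*y)
      · have h2 : u ∈ Iic (x*y) := mem_Iic.mpr h1.2
        have h3 : u ∈ Ioi (0:ℝ) := mem_Ioi.mpr h1.1
        simp only [hg₁, indicator_of_mem h1, indicator_of_mem h2, indicator_of_mem h3]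
      · by_cases h2 : u ∈ Iic (x*y)
        · have h3 : u ∉ Ioi (0:ℝ) := fun hu => h1 ⟨hu, h2⟩
          simp only [hg₁, indicator_of_mem h2, indicator_of_notMem h1,
            indicator_of_notMem h3, ENNReal.ofReal_zero]
        · simp only [indicator_of_notMem h1, indicator_of_notMem h2]
    rw [hind]
    exact (ofReal_integral_eq_lintegral_ofReal
      (hint₁.mono_set Ioc_subset_Ioi_self)
      ((ae_restrict_iff' measurableSet_Ioc).mpr
        (ae_of_all _ fun u hu => pdf_nonneg hα₁ hμ₁ hβ₁ hu.1))).symm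
  have h5 : ∫⁻ y in Ioi 0, ENNReal.ofReal (p₂ y) * f y ∂volume
      = ∫⁻ y in Ioi 0, ENNReal.ofReal (F₁ (x*y) * p₂ y) ∂volume := by
    refine setLIntegral_congr_fun_ae measurableSet_Ioi (ae_of_all _ fun y hy => ?_)
    rw [hslice y hy, ← ENNReal.ofReal_mul (pdf_nonneg hα₂ hμ₂ hβ₂ hy), mul_comm (p₂ y)]
  have hHnn : 0 ≤ᵐ[volume.restrict (Ioi 0)] fun y => F₁ (x*y) * p₂ y :=
    (ae_restrict_iff' measurableSet_Ioi).mpr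
      (ae_of_all _ fun y hy => mul_nonneg (hF₁nonneg _) (pdf_nonneg hα₂ hμ₂ hβ₂ hy))
  have hHm : AEStronglyMeasurable (fun y => F₁ (x*y) * p₂ y) (volume.restrict (Ioi 0)) :=
    ((hF₁mono.measurable.comp (measurable_const_mul x)).mul
      (pdf_measurable _ _ _)).aestronglyMeasurable
  have h6 : ∫ y in Ioi 0, F₁ (x*y) * p₂ y
      = (∫⁻ y in Ioi 0, ENNReal.ofReal (F₁ (x*y) * p₂ y) ∂volume).toReal :=
    integral_eq_lintegral_of_nonneg_ae hHnn hHm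
  have hPT : (ℙ {ω | Υ₁ ω / Υ₂ ω ≤ x}).toReal = ∫ y in Ioi 0, F₁ (x*y) * p₂ y := by
    rw [h1, h2, h3, h4, h5, h6]
  rw [hPT]
  set e : ℕ → ℝ := fun h => (α₁/2) * (μ₁ + (h:ℝ)) with he
  have he0 : ∀ h : ℕ, 0 ≤ e h := fun h => by rw [he]; positivity
  set G : ℕ → ℝ → ℝ := fun h y => (-1:ℝ)^h * ((x*y/β₁)^(α₁/2))^(μ₁+(h:ℝ))
      / (Real.Gamma μ₁ * ((μ₁+(h:ℝ)) * (h.factorial:ℝ))) * p₂ y with hG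
  have hGpt : ∀ y ∈ Ioi (0:ℝ), F₁ (x*y) * p₂ y = ∑' h : ℕ, G h y := by
    intro y hy
    have hxy : 0 < x * y := mul_pos hx hy
    simp only [hG]
    rw [show F₁ (x*y) = ∫ u in Ioc (0:ℝ) (x*y), p₁ u from rfl, hp₁,
      myCdfSeries hα₁ hμ₁ hβ₁ hxy, ← tsum_mul_right]
  have hGeq : ∀ h : ℕ, ∀ y ∈ Ioi (0:ℝ), G h y
      = ((-1:ℝ)^h * (x/β₁) ^ (e h) / (Real.Gamma μ₁ * ((μ₁+(h:ℝ)) * (h.factorial:ℝ))))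
        * (y ^ (e h) * p₂ y) := by
    intro h y hy
    have hy0 : (0:ℝ) < y := hy
    have key : ((x*y/β₁)^(α₁/2))^(μ₁+(h:ℝ)) = (x/β₁) ^ (e h) * y ^ (e h) := by
      rw [← rpow_mul (by positivity : (0:ℝ) ≤ x*y/β₁), show x*y/β₁ = (x/β₁)*y by ring,
        mul_rpow (by positivity) hy0.le, he]
    rw [hG]
    simp only
    rw [key]
    ring
  have hGint : ∀ h : ℕ, Integrable (G h) (volume.restrict (Ioi 0)) := fun h =>
    IntegrableOn.congr_fun
      ((pdf_moment_integrableOn hα₂ hμ₂ hβ₂ (he0 h)).const_mul _)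
      (fun y hy => (hGeq h y hy).symm) measurableSet_Ioi
  have harg : ∀ h : ℕ, μ₂ + 2 * (e h) / α₂ = k * ((h:ℝ) + μ₁) + μ₂ := by
    intro h
    rw [he, hk]
    field_simp
    ring
  have hmom : ∀ h : ℕ, ∫ y in Ioi 0, y ^ (e h) * p₂ y
      = β₂ ^ (e h) * Real.Gamma (k * ((h:ℝ) + μ₁) + μ₂) / Real.Gamma μ₂ := by
    intro h
    rw [hp₂, pdf_moment hα₂ hμ₂ hβ₂ (he0 h), harg h]
  have hzz : ∀ h : ℕ, (x/β₁) ^ (e h) * β₂ ^ (e h) = z ^ μ₁ * z ^ h := by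
    intro h
    rw [← mul_rpow (by positivity) hβ₂.le, show x/β₁*β₂ = x*β₂/β₁ by ring, he,
      rpow_mul (by positivity), ← hz, rpow_add hz0, rpow_natCast]
  have hβe : ∀ h : ℕ, (0:ℝ) < β₂ ^ (e h) := fun h => rpow_pos_of_pos hβ₂ _
  have hP : ∀ h : ℕ, (x/β₁) ^ (e h) = z ^ μ₁ * z ^ h / β₂ ^ (e h) := fun h => by
    rw [eq_div_iff (hβe h).ne']
    exact hzz h
  have hGval : ∀ h : ℕ, ∫ y in Ioi 0, G h y
      = (1 / (Real.Gamma μ₁ * Real.Gamma μ₂) * z ^ μ₁)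
        * ((-1:ℝ)^h * z ^ h * Real.Gamma (k * ((h:ℝ) + μ₁) + μ₂)
            / (((h:ℝ) + μ₁) * Real.Gamma ((h:ℝ) + 1))) := by
    intro h
    rw [setIntegral_congr_fun measurableSet_Ioi (hGeq h), integral_const_mul, hmom h,
      Real.Gamma_nat_eq_factorial, hP h]
    have hΓk : 0 < Real.Gamma (k * ((h:ℝ) + μ₁) + μ₂) := Real.Gamma_pos_of_pos (by positivity)
    have hfa : (0:ℝ) < (h.factorial:ℝ) := by positivity
    have hmh : (0:ℝ) < μ₁ + (h:ℝ) := by positivity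
    field_simp
    ring
  have hGnormval : ∀ h : ℕ, ∫ y in Ioi 0, ‖G h y‖
      = (1 / (Real.Gamma μ₁ * Real.Gamma μ₂) * z ^ μ₁)
        * (z ^ h * Real.Gamma (k * ((h:ℝ) + μ₁) + μ₂)
            / (((h:ℝ) + μ₁) * (h.factorial:ℝ))) := by
    intro h
    have habs2 : ∀ y ∈ Ioi (0:ℝ), ‖G h y‖
        = ((x/β₁) ^ (e h) / (Real.Gamma μ₁ * ((μ₁+(h:ℝ)) * (h.factorial:ℝ))))
          * (y ^ (e h) * p₂ y) := by
      intro y hy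
      have hy0 : (0:ℝ) < y := hy
      have hp2nn : 0 ≤ p₂ y := pdf_nonneg hα₂ hμ₂ hβ₂ hy0
      have hfa : (0:ℝ) < (h.factorial:ℝ) := by positivity
      have hsplit : ((-1:ℝ)^h * (x/β₁) ^ (e h)
            / (Real.Gamma μ₁ * ((μ₁+(h:ℝ)) * (h.factorial:ℝ)))) * (y ^ (e h) * p₂ y)
          = (-1:ℝ)^h * (((x/β₁) ^ (e h) / (Real.Gamma μ₁ * ((μ₁+(h:ℝ)) * (h.factorial:ℝ))))
            * (y ^ (e h) * p₂ y)) := by ring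
      have hnn : (0:ℝ) ≤ ((x/β₁) ^ (e h) / (Real.Gamma μ₁ * ((μ₁+(h:ℝ)) * (h.factorial:ℝ))))
          * (y ^ (e h) * p₂ y) := by positivity
      rw [Real.norm_eq_abs, hGeq h y hy, hsplit, abs_mul, abs_pow, abs_neg, abs_one, one_pow,
        one_mul, abs_of_nonneg hnn]
    rw [setIntegral_congr_fun measurableSet_Ioi habs2, integral_const_mul, hmom h, hP h]
    have hΓk : 0 < Real.Gamma (k * ((h:ℝ) + μ₁) + μ₂) := Real.Gamma_pos_of_pos (by positivity)
    have hfa : (0:ℝ) < (h.factorial:ℝ) := by positivity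
    have hmh : (0:ℝ) < μ₁ + (h:ℝ) := by positivity
    field_simp
    ring
  have hGsum : Summable (fun h : ℕ => ∫ y in Ioi 0, ‖G h y‖) :=
    Summable.congr (hS0.mul_left (1 / (Real.Gamma μ₁ * Real.Gamma μ₂) * z ^ μ₁))
      (fun h => (hGnormval h).symm)
  have hswap := MeasureTheory.integral_tsum_of_summable_integral_norm
    (μ := volume.restrict (Ioi 0)) hGint hGsum
  rw [setIntegral_congr_fun measurableSet_Ioi hGpt, ← hswap, tsum_congr hGval, tsum_mul_left]
end

section
/- Integral identity used in the ratio-PDF derivation: for k, a, b, c > 0 with appropriate parameters μ₁, μ₂ > 0, ∫₀^∞ w^(μ₂ + kμ₁ − 1) exp(−a w) exp(−b w^k) dw = a^(−(μ₂+kμ₁)) Σ_{h=0}^∞ (−1)^h (b a^(−k))^h Γ(k(h+μ₁)+μ₂) / h!, for k < 1 (the series converging absolutely). -/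
open MeasureTheory Real Set

theorem integral_series_identity
    (k μ₁ μ₂ a b : ℝ) (hk0 : 0 < k) (hk1 : k < 1)
    (hμ₁ : 0 < μ₁) (hμ₂ : 0 < μ₂) (ha : 0 < a) (hb : 0 < b) :
    Summable (fun h : ℕ =>
      |(-1 : ℝ) ^ h * (b * a ^ (-k)) ^ h * Real.Gamma (k * (h + μ₁) + μ₂) /
        h.factorial|) ∧
    (∫ w in Ioi (0:ℝ),
        w ^ (μ₂ + k * μ₁ - 1) * Real.exp (-a * w) * Real.exp (-b * w ^ k)) =
      a ^ (-(μ₂ + k * μ₁)) *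
        ∑' h : ℕ,
          (-1 : ℝ) ^ h * (b * a ^ (-k)) ^ h * Real.Gamma (k * (h + μ₁) + μ₂) /
            h.factorial := by
  set s : ℝ := μ₂ + k * μ₁ with hs_def
  have hs : 0 < s := by positivity
  set f : ℕ → ℝ → ℝ := fun h w =>
    w ^ (s - 1) * Real.exp (-a * w) * ((-b * w ^ k) ^ h / h.factorial) with hf_def
  have hmeas : ∀ h : ℕ, Measurable (f h) := by
    intro h
    fun_prop
  have hexp : ∀ x : ℝ, ∑' h : ℕ, x ^ h / (h.factorial : ℝ) = Real.exp x := by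
    intro x
    rw [Real.exp_eq_exp_ℝ, NormedSpace.exp_eq_tsum_div]
  -- bound b * w^k ≤ a/2 * w + C
  obtain ⟨C, hC⟩ : ∃ C : ℝ, ∀ w : ℝ, 0 ≤ w → b * w ^ k ≤ a / 2 * w + C := by
    set ε : ℝ := (a / (2 * b * k)) ^ (1 / (1 - k)) with hε_def
    have hε : 0 < ε := Real.rpow_pos_of_pos (by positivity) _
    have hεpow : ε ^ (1 - k) = a / (2 * b * k) := by
      rw [hε_def, ← Real.rpow_mul (by positivity),
        one_div_mul_cancel (by linarith : (1:ℝ) - k ≠ 0), Real.rpow_one]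
    refine ⟨b * (1 - k) * ε ^ (-k), fun w hw => ?_⟩
    have h1 : (ε * w) ^ k * (1:ℝ) ^ (1 - k) ≤ k * (ε * w) + (1 - k) * 1 :=
      Real.geom_mean_le_arith_mean2_weighted hk0.le (by linarith) (by positivity)
        zero_le_one (by ring)
    have h2 : (ε * w) ^ k ≤ k * ε * w + (1 - k) := by
      rw [Real.one_rpow, mul_one, mul_one] at h1
      nlinarith [h1]
    have h3 : w ^ k = ε ^ (-k) * (ε * w) ^ k := by
      rw [Real.mul_rpow hε.le hw, ← mul_assoc, ← Real.rpow_add hε, neg_add_cancel,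
        Real.rpow_zero, one_mul]
    have h4 : ε ^ (-k) * ε = ε ^ (1 - k) := by
      rw [show (1:ℝ) - k = -k + 1 by ring, Real.rpow_add hε, Real.rpow_one]
    have h5 : b * k * (a / (2 * b * k)) = a / 2 := by
      field_simp
    calc b * w ^ k = b * ε ^ (-k) * (ε * w) ^ k := by rw [h3]; ring
      _ ≤ b * ε ^ (-k) * (k * ε * w + (1 - k)) :=
          mul_le_mul_of_nonneg_left h2 (by positivity)
      _ = b * k * (ε ^ (-k) * ε) * w + b * (1 - k) * ε ^ (-k) := by ring
      _ = a / 2 * w + b * (1 - k) * ε ^ (-k) := by rw [h4, hεpow, h5]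
  -- integrability of the dominating function
  have hg : IntegrableOn
      (fun w => w ^ (s - 1) * Real.exp (-a * w) * Real.exp (b * w ^ k)) (Ioi 0) := by
    have hmaj : IntegrableOn
        (fun w => Real.exp C * (w ^ (s - 1) * Real.exp (-(a/2) * w))) (Ioi 0) := by
      apply Integrable.const_mul
      have := integrableOn_rpow_mul_exp_neg_mul_rpow (s := s - 1) (p := 1) (b := a/2)
        (by linarith) zero_lt_one (by positivity)
      simpa [Real.rpow_one, IntegrableOn] using this
    apply Integrable.mono' hmaj
    · apply Measurable.aestronglyMeasurable
      fun_prop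
    · filter_upwards [ae_restrict_mem measurableSet_Ioi] with w hw
      have hw0 : (0:ℝ) < w := hw
      rw [Real.norm_eq_abs, abs_of_nonneg (by positivity)]
      have hb1 : Real.exp (-a * w) * Real.exp (b * w ^ k) ≤
          Real.exp C * Real.exp (-(a/2) * w) := by
        rw [← Real.exp_add, ← Real.exp_add]
        apply Real.exp_le_exp.2
        have := hC w hw0.le
        linarith
      calc w ^ (s - 1) * Real.exp (-a * w) * Real.exp (b * w ^ k)
          = w ^ (s - 1) * (Real.exp (-a * w) * Real.exp (b * w ^ k)) := by ring
        _ ≤ w ^ (s - 1) * (Real.exp C * Real.exp (-(a/2) * w)) :=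
            mul_le_mul_of_nonneg_left hb1 (by positivity)
        _ = Real.exp C * (w ^ (s - 1) * Real.exp (-(a/2) * w)) := by ring
  -- norms of the terms
  have hnorm : ∀ (h : ℕ), ∀ w ∈ Ioi (0:ℝ), ‖f h w‖ =
      w ^ (s - 1) * Real.exp (-a * w) * ((b * w ^ k) ^ h / h.factorial) := by
    intro h w hw
    have hw0 : (0:ℝ) < w := hw
    rw [Real.norm_eq_abs, hf_def]
    simp only [abs_mul, abs_div, abs_pow, abs_of_nonneg (Real.rpow_nonneg hw0.le (s-1)),
      abs_of_nonneg (Real.exp_nonneg _), Nat.abs_cast]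
    congr 3
    rw [abs_neg, abs_of_pos hb, abs_of_nonneg (Real.rpow_nonneg hw0.le k)]
  have hsumm_w : ∀ w ∈ Ioi (0:ℝ), Summable (fun h : ℕ => ‖f h w‖) := by
    intro w hw
    apply Summable.congr
      ((Real.summable_pow_div_factorial (b * w ^ k)).mul_left
        (w ^ (s - 1) * Real.exp (-a * w)))
    intro h
    rw [hnorm h w hw]
  have hsum_w : ∀ w ∈ Ioi (0:ℝ), ∑' h : ℕ, ‖f h w‖ =
      w ^ (s - 1) * Real.exp (-a * w) * Real.exp (b * w ^ k) := by
    intro w hw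
    rw [tsum_congr (fun h => hnorm h w hw), tsum_mul_left, hexp]
  -- finiteness key
  have key : (∑' h : ℕ, ∫⁻ w in Ioi (0:ℝ), (‖f h w‖₊ : ENNReal)) ≠ ⊤ := by
    rw [← lintegral_tsum (fun h => (hmeas h).nnnorm.coe_nnreal_ennreal.aemeasurable)]
    have heq : (∫⁻ w in Ioi (0:ℝ), ∑' h : ℕ, (‖f h w‖₊ : ENNReal)) =
        ∫⁻ w in Ioi (0:ℝ),
          ENNReal.ofReal (w ^ (s - 1) * Real.exp (-a * w) * Real.exp (b * w ^ k)) := by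
      apply lintegral_congr_ae
      filter_upwards [ae_restrict_mem measurableSet_Ioi] with w hw
      rw [tsum_congr (fun h => (show ENNReal.ofReal ‖f h w‖ = (‖f h w‖₊ : ENNReal) by
          rw [Real.norm_eq_abs, ← Real.enorm_eq_ofReal_abs, enorm_eq_nnnorm]).symm),
        ← ENNReal.ofReal_tsum_of_nonneg (fun h => norm_nonneg _) (hsumm_w w hw),
        hsum_w w hw]
    rw [heq]
    refine (lt_of_le_of_lt (lintegral_mono fun w => ?_) hg.2).ne
    rw [Real.enorm_eq_ofReal_abs]
    exact ENNReal.ofReal_le_ofReal (le_abs_self _)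
  -- value of each integral
  have hInt : ∀ h : ℕ, ∫ w in Ioi (0:ℝ), f h w =
      a ^ (-s) * ((-1:ℝ) ^ h * (b * a ^ (-k)) ^ h *
        Real.Gamma (k * (h + μ₁) + μ₂) / h.factorial) := by
    intro h
    have h1 : ∫ w in Ioi (0:ℝ), f h w =
        ((-b) ^ h / h.factorial) *
          ∫ w in Ioi (0:ℝ), w ^ ((s + k * h) - 1) * Real.exp (-(a * w)) := by
      rw [← integral_const_mul]
      apply setIntegral_congr_fun measurableSet_Ioi
      intro w hw
      have hw0 : (0:ℝ) < w := hw
      have e1 : (w ^ k) ^ h = w ^ (k * (h:ℝ)) := by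
        rw [Real.rpow_mul hw0.le, Real.rpow_natCast]
      simp only [hf_def]
      rw [show -a * w = -(a * w) by ring, mul_pow, e1,
        show (s + k * (h:ℝ)) - 1 = (s - 1) + k * (h:ℝ) by ring, Real.rpow_add hw0]
      ring
    rw [h1, integral_rpow_mul_exp_neg_mul_Ioi (by positivity) ha]
    have hΓ : k * ((h:ℝ) + μ₁) + μ₂ = s + k * h := by rw [hs_def]; ring
    rw [hΓ]
    have e2 : (1/a) ^ (s + k * (h:ℝ)) = a ^ (-s) * (a ^ (-k)) ^ h := by
      rw [one_div, ← Real.rpow_neg_one a, ← Real.rpow_mul ha.le,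
        show -1 * (s + k * (h:ℝ)) = -s + -k * (h:ℝ) by ring, Real.rpow_add ha,
        Real.rpow_mul ha.le, Real.rpow_natCast]
    rw [e2, neg_pow b h, mul_pow]
    ring
  -- pointwise expansion of the integrand
  have hpt : ∀ w ∈ Ioi (0:ℝ),
      w ^ (s - 1) * Real.exp (-a * w) * Real.exp (-b * w ^ k) = ∑' h : ℕ, f h w := by
    intro w hw
    rw [show Real.exp (-b * w ^ k) = ∑' h : ℕ, (-b * w ^ k) ^ h / (h.factorial : ℝ) from
      (hexp _).symm, ← tsum_mul_left]
  constructor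
  · -- summability
    have hsummable : Summable (fun h : ℕ =>
        (∫⁻ w in Ioi (0:ℝ), (‖f h w‖₊ : ENNReal)).toReal) := ENNReal.summable_toReal key
    apply Summable.of_nonneg_of_le (fun h => abs_nonneg _) _ (hsummable.mul_left (a ^ s))
    intro h
    have h1 : |∫ w in Ioi (0:ℝ), f h w| ≤
        (∫⁻ w in Ioi (0:ℝ), (‖f h w‖₊ : ENNReal)).toReal := by
      have := norm_integral_le_lintegral_norm (μ := volume.restrict (Ioi 0)) (f h)
      simp only [Real.norm_eq_abs, ← Real.enorm_eq_ofReal_abs, enorm_eq_nnnorm] at this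
      exact this
    rw [hInt h, abs_mul,
      abs_of_pos (Real.rpow_pos_of_pos ha (-s))] at h1
    have h2 : |(-1:ℝ) ^ h * (b * a ^ (-k)) ^ h * Real.Gamma (k * (h + μ₁) + μ₂) /
        h.factorial| = a ^ s * (a ^ (-s) *
        |(-1:ℝ) ^ h * (b * a ^ (-k)) ^ h * Real.Gamma (k * (h + μ₁) + μ₂) /
          h.factorial|) := by
      rw [← mul_assoc, ← Real.rpow_add ha]
      norm_num
    rw [h2]
    exact mul_le_mul_of_nonneg_left h1 (by positivity)
  · -- the integral identity
    rw [setIntegral_congr_fun measurableSet_Ioi hpt,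
      integral_tsum (fun h => (hmeas h).aestronglyMeasurable) key]
    simp_rw [hInt]
    rw [tsum_mul_left]
end
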